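/- In a soft reserve system induced by a baseline priority order with at most five categories and where each patient is a beneficiary of at most one preferential treatment category: if ▷' is obtained from ▷ by swapping a preferential treatment category c with its immediate predecessor c' (so c is processed earlier under ▷'), then the set of beneficiaries of c matched under φ_{▷'} is contained in the set of beneficiaries of c matched under φ_▷: φ_{▷'}(I_c) ⊆ φ_▷(I_c). -/

import Mathlib

open Finset

section ReserveSystem

variable {I C : Type*} [Fintype I] [DecidableEq I] [Fintype C] [DecidableEq C]

/-- Patient `i` is eligible for category `c` (i.e. `i π_c ∅`). Priorities are encoded by
injective score functions `pr c : Option I → ℕ`, where `none` stands for `∅` and a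
higher score means a higher priority. -/
def Elig (pr : C → Option I → ℕ) (c : C) (i : I) : Prop :=
  pr c none < pr c (some i)

instance (pr : C → Option I → ℕ) (c : C) (i : I) : Decidable (Elig pr c i) := by
  unfold Elig; infer_instance

/-- A matching assigns each patient a category or `none`, respecting capacities `r`. -/
def IsMatching (r : C → ℕ) (μ : I → Option C) : Prop :=
  ∀ c : C, (univ.filter (fun i => μ i = some c)).card ≤ r c

/-- Soft reserves induced by the baseline priority `π`: every patient is eligible for
every category; the unreserved category `u` ranks patients by `π`; every other category
ranks its beneficiaries above non-beneficiaries and within each group by `π`. -/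
def BaselineSoft (π : I → ℕ) (Ben : C → Finset I) (u : C)
    (pr : C → Option I → ℕ) : Prop :=
  (∀ c i, pr c none < pr c (some i)) ∧
  (∀ i j : I, pr u (some j) < pr u (some i) ↔ π j < π i) ∧
  (∀ c, c ≠ u → ∀ i j : I, pr c (some j) < pr c (some i) ↔
      ((i ∈ Ben c ∧ j ∉ Ben c) ∨ ((i ∈ Ben c ↔ j ∈ Ben c) ∧ π j < π i)))

/-- Patients selected when category `c` with `k` units is processed on the pool `avail`:
the `k` highest-`π_c`-priority eligible patients (all eligible ones if fewer than `k`). -/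
def seqTop (pr : C → Option I → ℕ) (c : C) (k : ℕ) (avail : Finset I) : Finset I :=
  (avail.filter (fun i => Elig pr c i)).filter (fun i =>
    ((avail.filter (fun i' => Elig pr c i')).filter
        (fun j => pr c (some i) < pr c (some j))).card < k)

/-- The sequential reserve matching induced by processing the given list of categories in
order, over the pool `avail` of patients. -/
def seqMatch (pr : C → Option I → ℕ) (r : C → ℕ) : List C → Finset I → I → Option C
  | [], _, _ => none
  | c :: L, avail, i =>
      if i ∈ seqTop pr c (r c) avail then some c
      else seqMatch pr r L (avail \ seqTop pr c (r c) avail) i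

/-! ### Auxiliary machinery for the proof -/
set_option linter.unusedSectionVars false

/-- Rank of `j` in pool `P` under the priority of category `e`. -/
def RSrk (pr : C → Option I → ℕ) (e : C) (P : Finset I) (j : I) : ℕ :=
  (P.filter (fun j' => pr e (some j) < pr e (some j'))).card

/-- One processing step: remove the selected patients from the pool. -/
def RSstep (pr : C → Option I → ℕ) (r : C → ℕ) (e : C) (P : Finset I) : Finset I :=
  P \ seqTop pr e (r e) P

/-- Residual pool after sequentially processing a list of categories. -/
def RSresid (pr : C → Option I → ℕ) (r : C → ℕ) : List C → Finset I → Finset I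
  | [], P => P
  | e :: L, P => RSresid pr r L (RSstep pr r e P)

variable {pr : C → Option I → ℕ} {r : C → ℕ}

lemma RSseqTop_subset {e : C} {k : ℕ} {P : Finset I} : seqTop pr e k P ⊆ P :=
  (Finset.filter_subset _ _).trans (Finset.filter_subset _ _)

lemma RSstep_subset {e : C} {P : Finset I} : RSstep pr r e P ⊆ P := Finset.sdiff_subset

lemma RSresid_subset : ∀ (L : List C) (P : Finset I), RSresid pr r L P ⊆ P
  | [], _ => Finset.Subset.refl _
  | e :: L, P => (RSresid_subset L _).trans RSstep_subset

lemma RSresid_append (L₁ L₂ : List C) (P : Finset I) :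
    RSresid pr r (L₁ ++ L₂) P = RSresid pr r L₂ (RSresid pr r L₁ P) := by
  induction L₁ generalizing P with
  | nil => rfl
  | cons e L ih => simp [RSresid, ih]

lemma RSseqMatch_none (h1 : ∀ c i, pr c none < pr c (some i)) :
    ∀ (L : List C) (P : Finset I) (i : I), i ∈ P →
      (seqMatch pr r L P i = none ↔ i ∈ RSresid pr r L P)
  | [], P, i, hi => by simp [seqMatch, RSresid, hi]
  | e :: L, P, i, hi => by
      by_cases h : i ∈ seqTop pr e (r e) P
      · simp only [seqMatch, if_pos h, RSresid]
        constructor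
        · intro hc; exact absurd hc (by simp)
        · intro hc
          have hmem := RSresid_subset L _ hc
          simp only [RSstep, Finset.mem_sdiff] at hmem
          exact absurd h hmem.2
      · simp only [seqMatch, if_neg h, RSresid]
        exact RSseqMatch_none h1 L _ i (by simp only [RSstep, Finset.mem_sdiff]; exact ⟨hi, h⟩)

lemma RSmem_seqTop (h1 : ∀ c i, pr c none < pr c (some i)) {e : C} {k : ℕ} {P : Finset I}
    {j : I} : j ∈ seqTop pr e k P ↔ j ∈ P ∧ RSrk pr e P j < k := by
  have hfe : P.filter (fun i => Elig pr e i) = P :=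
    Finset.filter_true_of_mem (fun x _ => h1 e x)
  rw [seqTop, hfe, Finset.mem_filter, RSrk]

lemma RSrank_mono {e : C} {P Q : Finset I} (h : P ⊆ Q) (j : I) :
    RSrk pr e P j ≤ RSrk pr e Q j :=
  Finset.card_le_card (Finset.filter_subset_filter _ h)

/-- if `pr j' < pr j` and `j ∈ P` then `j` has strictly smaller rank than `j'`. -/
lemma RSrank_lt {e : C} {P : Finset I} {j j' : I} (hj : j ∈ P)
    (h : pr e (some j') < pr e (some j)) : RSrk pr e P j < RSrk pr e P j' := by
  have hsub : P.filter (fun z => pr e (some j) < pr e (some z)) ⊆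
      P.filter (fun z => pr e (some j') < pr e (some z)) := by
    intro z hz
    rw [Finset.mem_filter] at hz ⊢
    exact ⟨hz.1, h.trans hz.2⟩
  have hmem : j ∈ P.filter (fun z => pr e (some j') < pr e (some z)) :=
    Finset.mem_filter.2 ⟨hj, h⟩
  have hnot : j ∉ P.filter (fun z => pr e (some j) < pr e (some z)) := by
    simp [Finset.mem_filter]
  exact Finset.card_lt_card ((Finset.ssubset_iff_of_subset hsub).2 ⟨j, hmem, hnot⟩)

/-- ranks determine priorities: smaller rank in the same pool means higher priority. -/
lemma RSpr_lt_of_rank (hinj : ∀ c, Function.Injective (pr c)) {e : C} {P : Finset I}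
    {j j' : I} (hj : j ∈ P) (hj' : j' ∈ P) (h : RSrk pr e P j < RSrk pr e P j') :
    pr e (some j') < pr e (some j) := by
  rcases lt_trichotomy (pr e (some j)) (pr e (some j'))  with hlt | heq | hgt
  · exact absurd (RSrank_lt hj' hlt) (by omega)
  · have : j = j' := by
      have := hinj e heq; exact Option.some.inj this
    subst this; omega
  · exact hgt

lemma RSrank_lt_card {e : C} {P : Finset I} {j : I} (hj : j ∈ P) :
    RSrk pr e P j < P.card := by
  have hsub : P.filter (fun z => pr e (some j) < pr e (some z)) ⊆ P.erase j := by
    intro z hz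
    rw [Finset.mem_filter] at hz
    rw [Finset.mem_erase]
    refine ⟨fun hzj => ?_, hz.1⟩
    subst hzj; exact lt_irrefl _ hz.2
  calc RSrk pr e P j ≤ (P.erase j).card := Finset.card_le_card hsub
    _ < P.card := Finset.card_erase_lt_of_mem hj

lemma RSrank_injOn (hinj : ∀ c, Function.Injective (pr c)) {e : C} {P : Finset I} :
    Set.InjOn (RSrk pr e P) P := by
  intro a ha b hb hab
  by_contra hne
  rcases lt_trichotomy (pr e (some a)) (pr e (some b)) with hlt | heq | hgt
  · exact absurd (RSrank_lt hb hlt) (by omega)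
  · exact hne (Option.some.inj (hinj e heq))
  · exact absurd (RSrank_lt ha hgt) (by omega)

lemma RSrank_image (hinj : ∀ c, Function.Injective (pr c)) {e : C} {P : Finset I} :
    P.image (RSrk pr e P) = Finset.range P.card := by
  apply Finset.eq_of_subset_of_card_le
  · intro x hx
    rw [Finset.mem_image] at hx
    obtain ⟨j, hj, rfl⟩ := hx
    exact Finset.mem_range.2 (RSrank_lt_card hj)
  · rw [Finset.card_range, Finset.card_image_of_injOn (RSrank_injOn hinj)]

lemma RScard_seqTop (h1 : ∀ c i, pr c none < pr c (some i))
    (hinj : ∀ c, Function.Injective (pr c)) {e : C} {k : ℕ} {P : Finset I} :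
    (seqTop pr e k P).card = min k P.card := by
  have hset : seqTop pr e k P = P.filter (fun j => RSrk pr e P j < k) := by
    ext j
    rw [RSmem_seqTop h1, Finset.mem_filter]
  rw [hset]
  have himg : (P.filter (fun j => RSrk pr e P j < k)).image (RSrk pr e P) =
      (P.image (RSrk pr e P)).filter (fun x => x < k) := by
    rw [Finset.filter_image]
  have hinj' : Set.InjOn (RSrk pr e P) (P.filter (fun j => RSrk pr e P j < k)) :=
    (RSrank_injOn hinj).mono (by intro x hx; exact Finset.mem_filter.1 hx |>.1)
  have hcard1 : (P.filter (fun j => RSrk pr e P j < k)).card =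
      ((P.filter (fun j => RSrk pr e P j < k)).image (RSrk pr e P)).card :=
    (Finset.card_image_of_injOn hinj').symm
  rw [hcard1, himg, RSrank_image hinj]
  have : (Finset.range P.card).filter (fun x => x < k) = Finset.range (min k P.card) := by
    ext x
    simp only [Finset.mem_filter, Finset.mem_range, Nat.lt_min]
    tauto
  rw [this, Finset.card_range]

lemma RScard_step (h1 : ∀ c i, pr c none < pr c (some i))
    (hinj : ∀ c, Function.Injective (pr c)) {e : C} {P : Finset I} :
    (RSstep pr r e P).card = P.card - min (r e) P.card := by
  rw [RSstep, Finset.card_sdiff_of_subset RSseqTop_subset, RScard_seqTop h1 hinj]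

lemma RScard_sdiff_eq {P Q : Finset I} (h : P.card = Q.card) :
    (P \ Q).card = (Q \ P).card := by
  have h1 : (P \ Q).card + (P ∩ Q).card = P.card := Finset.card_sdiff_add_card_inter P Q
  have h2 : (Q \ P).card + (Q ∩ P).card = Q.card := Finset.card_sdiff_add_card_inter Q P
  rw [Finset.inter_comm] at h2
  omega

/-! ### Priority comparison helpers -/

section Compare

variable {π : I → ℕ} {Ben : C → Finset I} {u : C}

lemma RSpr_lt_of_pi
    (h2 : ∀ i j : I, pr u (some j) < pr u (some i) ↔ π j < π i)
    (h3 : ∀ c, c ≠ u → ∀ i j : I, pr c (some j) < pr c (some i) ↔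
      ((i ∈ Ben c ∧ j ∉ Ben c) ∨ ((i ∈ Ben c ↔ j ∈ Ben c) ∧ π j < π i)))
    {e : C} {a b : I} (ha : e = u ∨ a ∉ Ben e) (hπ : π a < π b) :
    pr e (some a) < pr e (some b) := by
  by_cases heu : e = u
  · subst heu; exact (h2 b a).2 hπ
  · have haB : a ∉ Ben e := ha.resolve_left heu
    rw [h3 e heu b a]
    by_cases hb : b ∈ Ben e
    · exact Or.inl ⟨hb, haB⟩
    · exact Or.inr ⟨iff_of_false hb haB, hπ⟩

lemma RSpr_not_lt
    (h3 : ∀ c, c ≠ u → ∀ i j : I, pr c (some j) < pr c (some i) ↔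
      ((i ∈ Ben c ∧ j ∉ Ben c) ∨ ((i ∈ Ben c ↔ j ∈ Ben c) ∧ π j < π i)))
    {e : C} (heu : e ≠ u) {a b : I} (ha : a ∈ Ben e) (hb : b ∉ Ben e) :
    ¬ pr e (some a) < pr e (some b) := by
  rw [h3 e heu b a]
  rintro (⟨hbB, _⟩ | ⟨hiff, _⟩)
  · exact hb hbB
  · exact hb (hiff.2 ha)

lemma RSsuper
    (h3 : ∀ c, c ≠ u → ∀ i j : I, pr c (some j) < pr c (some i) ↔
      ((i ∈ Ben c ∧ j ∉ Ben c) ∨ ((i ∈ Ben c ↔ j ∈ Ben c) ∧ π j < π i)))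
    {c : C} (hc : c ≠ u) {i s : I} (hi : i ∈ Ben c)
    (h : pr c (some i) < pr c (some s)) : s ∈ Ben c ∧ π i < π s := by
  rw [h3 c hc s i] at h
  rcases h with ⟨_, hiB⟩ | ⟨hiff, hπ⟩
  · exact absurd hi hiB
  · exact ⟨hiff.2 hi, hπ⟩

lemma RSnotBen
    (honce : ∀ (i : I) (c c' : C), c ≠ u → c' ≠ u → i ∈ Ben c → i ∈ Ben c' → c = c')
    {c e : C} (hc : c ≠ u) (he : e ≠ u) (hec : e ≠ c) {j : I} (hj : j ∈ Ben c) :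
    j ∉ Ben e := fun h => hec (honce j e c he hc h hj)

lemma RSbeats
    (h2 : ∀ i j : I, pr u (some j) < pr u (some i) ↔ π j < π i)
    (h3 : ∀ c, c ≠ u → ∀ i j : I, pr c (some j) < pr c (some i) ↔
      ((i ∈ Ben c ∧ j ∉ Ben c) ∨ ((i ∈ Ben c ↔ j ∈ Ben c) ∧ π j < π i)))
    (honce : ∀ (i : I) (c c' : C), c ≠ u → c' ≠ u → i ∈ Ben c → i ∈ Ben c' → c = c')
    {c e : C} (hc : c ≠ u) (hec : e ≠ c) {i y : I} (hi : i ∈ Ben c)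
    (hπ : π i < π y) : pr e (some i) < pr e (some y) := by
  by_cases heu : e = u
  · exact RSpr_lt_of_pi h2 h3 (Or.inl heu) hπ
  · exact RSpr_lt_of_pi h2 h3 (Or.inr (RSnotBen honce hc heu hec hi)) hπ

end Compare

/-! ### Counting lemmas for coupled pools -/

section Coupled

variable {π : I → ℕ} {Ben : C → Finset I} {u : C}

/-- Survival transfer: if every extra element of `P₁` beats `i` at `e`, the pools have
equal size and `i` escapes selection in `P₂`, then it escapes selection in `P₁`. -/
lemma RSsurv (h1 : ∀ c i, pr c none < pr c (some i)) {e : C} {k : ℕ}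
    {P₁ P₂ : Finset I} {i : I}
    (hcard : P₁.card = P₂.card) (hi1 : i ∈ P₁) (hi2 : i ∈ P₂)
    (hD1 : ∀ y ∈ P₁ \ P₂, pr e (some i) < pr e (some y))
    (htop : i ∉ seqTop pr e k P₂) : i ∉ seqTop pr e k P₁ := by
  rw [RSmem_seqTop h1] at htop ⊢
  have hk2 : k ≤ RSrk pr e P₂ i := le_of_not_gt (fun hlt => htop ⟨hi2, hlt⟩)
  rintro ⟨-, hlt⟩
  set F₁ := P₁.filter (fun z => pr e (some i) < pr e (some z)) with hF₁
  set F₂ := P₂.filter (fun z => pr e (some i) < pr e (some z)) with hF₂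
  have hc2 : F₂.card ≤ (F₂ ∩ P₁).card + (P₂ \ P₁).card := by
    refine le_trans (Finset.card_le_card ?_) (Finset.card_union_le _ _)
    intro z hz
    by_cases hz1 : z ∈ P₁
    · exact Finset.mem_union_left _ (Finset.mem_inter.2 ⟨hz, hz1⟩)
    · exact Finset.mem_union_right _
        (Finset.mem_sdiff.2 ⟨(Finset.mem_filter.1 hz).1, hz1⟩)
  have hsub2 : (F₂ ∩ P₁) ∪ (P₁ \ P₂) ⊆ F₁ := by
    intro z hz
    rcases Finset.mem_union.1 hz with hz | hz
    · have hz' := Finset.mem_inter.1 hz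
      exact Finset.mem_filter.2 ⟨hz'.2, (Finset.mem_filter.1 hz'.1).2⟩
    · exact Finset.mem_filter.2 ⟨(Finset.mem_sdiff.1 hz).1, hD1 z hz⟩
  have hdisj : Disjoint (F₂ ∩ P₁) (P₁ \ P₂) := by
    rw [Finset.disjoint_left]
    intro z hz hz'
    exact (Finset.mem_sdiff.1 hz').2 (Finset.mem_filter.1 (Finset.mem_inter.1 hz).1).1
  have hc1 : (F₂ ∩ P₁).card + (P₁ \ P₂).card ≤ F₁.card := by
    rw [← Finset.card_union_of_disjoint hdisj]
    exact Finset.card_le_card hsub2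
  have heqd : (P₂ \ P₁).card = (P₁ \ P₂).card := RScard_sdiff_eq hcard.symm
  have : RSrk pr e P₂ i ≤ RSrk pr e P₁ i := by
    have e2 : RSrk pr e P₂ i = F₂.card := rfl
    have e1 : RSrk pr e P₁ i = F₁.card := rfl
    omega
  omega

/-- If `y` is a beneficiary of `e ≠ u` and no extra element of `P₁` is, then `y`'s rank
in `P₁` is at most its rank in `P₂`. -/
lemma RSrank_le_of_BenE
    (h3 : ∀ c, c ≠ u → ∀ i j : I, pr c (some j) < pr c (some i) ↔
      ((i ∈ Ben c ∧ j ∉ Ben c) ∨ ((i ∈ Ben c ↔ j ∈ Ben c) ∧ π j < π i)))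
    {e : C} (heu : e ≠ u) {P₁ P₂ : Finset I} {y : I} (hyB : y ∈ Ben e)
    (hD1 : ∀ s ∈ P₁ \ P₂, s ∉ Ben e) :
    RSrk pr e P₁ y ≤ RSrk pr e P₂ y := by
  apply Finset.card_le_card
  intro z hz
  rw [Finset.mem_filter] at hz ⊢
  refine ⟨?_, hz.2⟩
  by_contra hz2
  exact RSpr_not_lt h3 heu hyB (hD1 z (Finset.mem_sdiff.2 ⟨hz.1, hz2⟩)) hz.2

/-- If `e = u` or `y` is not a beneficiary of `e`, and all extra elements of `P₂` have
higher baseline priority than `y`, then `y`'s rank in `P₁` is at most its rank in `P₂`. -/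
lemma RSrank_le_dom
    (h2 : ∀ i j : I, pr u (some j) < pr u (some i) ↔ π j < π i)
    (h3 : ∀ c, c ≠ u → ∀ i j : I, pr c (some j) < pr c (some i) ↔
      ((i ∈ Ben c ∧ j ∉ Ben c) ∨ ((i ∈ Ben c ↔ j ∈ Ben c) ∧ π j < π i)))
    {e : C} {P₁ P₂ : Finset I} {y : I} (hcase : e = u ∨ y ∉ Ben e)
    (hcard : P₁.card = P₂.card)
    (hD2 : ∀ x ∈ P₂ \ P₁, π y < π x) :
    RSrk pr e P₁ y ≤ RSrk pr e P₂ y := by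
  set F₁ := P₁.filter (fun z => pr e (some y) < pr e (some z)) with hF₁
  set F₂ := P₂.filter (fun z => pr e (some y) < pr e (some z)) with hF₂
  have hc1 : F₁.card ≤ (F₁ ∩ P₂).card + (P₁ \ P₂).card := by
    refine le_trans (Finset.card_le_card ?_) (Finset.card_union_le _ _)
    intro z hz
    by_cases hz2 : z ∈ P₂
    · exact Finset.mem_union_left _ (Finset.mem_inter.2 ⟨hz, hz2⟩)
    · exact Finset.mem_union_right _
        (Finset.mem_sdiff.2 ⟨(Finset.mem_filter.1 hz).1, hz2⟩)
  have hsub2 : (F₁ ∩ P₂) ∪ (P₂ \ P₁) ⊆ F₂ := by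
    intro z hz
    rcases Finset.mem_union.1 hz with hz | hz
    · have hz' := Finset.mem_inter.1 hz
      exact Finset.mem_filter.2 ⟨hz'.2, (Finset.mem_filter.1 hz'.1).2⟩
    · exact Finset.mem_filter.2 ⟨(Finset.mem_sdiff.1 hz).1,
        RSpr_lt_of_pi h2 h3 hcase (hD2 z hz)⟩
  have hdisj : Disjoint (F₁ ∩ P₂) (P₂ \ P₁) := by
    rw [Finset.disjoint_left]
    intro z hz hz'
    exact (Finset.mem_sdiff.1 hz').2 (Finset.mem_filter.1 (Finset.mem_inter.1 hz).1).1
  have hc2 : (F₁ ∩ P₂).card + (P₂ \ P₁).card ≤ F₂.card := by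
    rw [← Finset.card_union_of_disjoint hdisj]
    exact Finset.card_le_card hsub2
  have heqd : (P₁ \ P₂).card = (P₂ \ P₁).card := RScard_sdiff_eq hcard
  show F₁.card ≤ F₂.card
  omega

end Coupled

/-! ### The coupled step lemmas -/

section Steps

variable {π : I → ℕ} {Ben : C → Finset I} {u : C}

/-- First step after the swap: the invariant (extra elements of `P₁` are super-competitors
of `i`, extra elements of `P₂` baseline-dominate the common pool) yields survival of `i`
together with preservation of the super-competitor structure. -/
lemma RSstepS1
    (h1 : ∀ c i, pr c none < pr c (some i))
    (h2 : ∀ i j : I, pr u (some j) < pr u (some i) ↔ π j < π i)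
    (h3 : ∀ c, c ≠ u → ∀ i j : I, pr c (some j) < pr c (some i) ↔
      ((i ∈ Ben c ∧ j ∉ Ben c) ∨ ((i ∈ Ben c ↔ j ∈ Ben c) ∧ π j < π i)))
    (hinj : ∀ c, Function.Injective (pr c))
    (honce : ∀ (i : I) (c c' : C), c ≠ u → c' ≠ u → i ∈ Ben c → i ∈ Ben c' → c = c')
    {c e : C} (hc : c ≠ u) (hec : e ≠ c) {P₁ P₂ : Finset I} {i : I} (hiB : i ∈ Ben c)
    (hcard : P₁.card = P₂.card) (hi1 : i ∈ P₁) (hi2 : i ∈ P₂)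
    (hD1 : ∀ y ∈ P₁ \ P₂, y ∈ Ben c ∧ π i < π y)
    (hD2 : ∀ x ∈ P₂ \ P₁, ∀ z ∈ P₂ ∩ P₁, π z < π x)
    (htop : i ∉ seqTop pr e (r e) P₂) :
    i ∉ seqTop pr e (r e) P₁ ∧
      (RSstep pr r e P₁).card = (RSstep pr r e P₂).card ∧
      ∀ y ∈ RSstep pr r e P₁ \ RSstep pr r e P₂, y ∈ Ben c ∧ π i < π y := by
  refine ⟨RSsurv h1 hcard hi1 hi2
    (fun y hy => RSbeats h2 h3 honce hc hec hiB (hD1 y hy).2) htop, ?_, ?_⟩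
  · rw [RScard_step h1 hinj, RScard_step h1 hinj, hcard]
  · intro y hy
    simp only [RSstep, Finset.mem_sdiff, not_and, not_not] at hy
    obtain ⟨⟨hy1, hyt1⟩, hy2'⟩ := hy
    by_cases hy2 : y ∈ P₂
    · exfalso
      have hyt2 : y ∈ seqTop pr e (r e) P₂ := hy2' hy2
      have hrk2 : RSrk pr e P₂ y < r e := ((RSmem_seqTop h1).1 hyt2).2
      have hrk1 : r e ≤ RSrk pr e P₁ y :=
        le_of_not_gt (fun hh => hyt1 ((RSmem_seqTop h1).2 ⟨hy1, hh⟩))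
      by_cases hcase : e = u ∨ y ∉ Ben e
      · have := RSrank_le_dom (pr := pr) h2 h3 hcase hcard
          (fun x hx => hD2 x hx y (Finset.mem_inter.2 ⟨hy2, hy1⟩))
        omega
      · push_neg at hcase
        have := RSrank_le_of_BenE (pr := pr) h3 hcase.1 hcase.2
          (fun s hs => RSnotBen honce hc hcase.1 hec (hD1 s hs).1)
        omega
    · exact hD1 y (Finset.mem_sdiff.2 ⟨hy1, hy2⟩)

/-- Second step after the swap: the pure super-competitor structure on `P₁ \ P₂` yields
survival of `i` and the weaker invariant that extra elements of `P₁` beat `i` in `π`. -/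
lemma RSstepS2
    (h1 : ∀ c i, pr c none < pr c (some i))
    (h2 : ∀ i j : I, pr u (some j) < pr u (some i) ↔ π j < π i)
    (h3 : ∀ c, c ≠ u → ∀ i j : I, pr c (some j) < pr c (some i) ↔
      ((i ∈ Ben c ∧ j ∉ Ben c) ∨ ((i ∈ Ben c ↔ j ∈ Ben c) ∧ π j < π i)))
    (hinj : ∀ c, Function.Injective (pr c))
    (honce : ∀ (i : I) (c c' : C), c ≠ u → c' ≠ u → i ∈ Ben c → i ∈ Ben c' → c = c')
    {c e : C} (hc : c ≠ u) (hec : e ≠ c) {P₁ P₂ : Finset I} {i : I} (hiB : i ∈ Ben c)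
    (hcard : P₁.card = P₂.card) (hi1 : i ∈ P₁) (hi2 : i ∈ P₂)
    (hD1 : ∀ y ∈ P₁ \ P₂, y ∈ Ben c ∧ π i < π y)
    (htop : i ∉ seqTop pr e (r e) P₂) :
    i ∉ seqTop pr e (r e) P₁ ∧
      (RSstep pr r e P₁).card = (RSstep pr r e P₂).card ∧
      ∀ y ∈ RSstep pr r e P₁ \ RSstep pr r e P₂, π i < π y := by
  refine ⟨RSsurv h1 hcard hi1 hi2
    (fun y hy => RSbeats h2 h3 honce hc hec hiB (hD1 y hy).2) htop, ?_, ?_⟩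
  · rw [RScard_step h1 hinj, RScard_step h1 hinj, hcard]
  · intro y hy
    simp only [RSstep, Finset.mem_sdiff, not_and, not_not] at hy
    obtain ⟨⟨hy1, hyt1⟩, hy2'⟩ := hy
    by_cases hy2 : y ∈ P₂
    · have hyt2 : y ∈ seqTop pr e (r e) P₂ := hy2' hy2
      have hrk2 : RSrk pr e P₂ y < r e := ((RSmem_seqTop h1).1 hyt2).2
      have hrki : r e ≤ RSrk pr e P₂ i :=
        le_of_not_gt (fun hh => htop ((RSmem_seqTop h1).2 ⟨hi2, hh⟩))
      have hpr : pr e (some i) < pr e (some y) :=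
        RSpr_lt_of_rank hinj hy2 hi2 (by omega)
      by_cases heu : e = u
      · subst heu; exact (h2 y i).1 hpr
      · by_cases hyB : y ∈ Ben e
        · exfalso
          have hrk1 : r e ≤ RSrk pr e P₁ y :=
            le_of_not_gt (fun hh => hyt1 ((RSmem_seqTop h1).2 ⟨hy1, hh⟩))
          have := RSrank_le_of_BenE (pr := pr) h3 heu hyB
            (fun s hs => RSnotBen honce hc heu hec (hD1 s hs).1)
          omega
        · rw [h3 e heu y i] at hpr
          rcases hpr with ⟨hyB', _⟩ | ⟨_, hπ⟩
          · exact absurd hyB' hyB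
          · exact hπ
    · exact (hD1 y (Finset.mem_sdiff.2 ⟨hy1, hy2⟩)).2

end Steps

/-! ### Base analysis of the swapped adjacent pair -/

section Base

variable {π : I → ℕ} {Ben : C → Finset I} {u : C}

lemma RSbase
    (h1 : ∀ c i, pr c none < pr c (some i))
    (h2 : ∀ i j : I, pr u (some j) < pr u (some i) ↔ π j < π i)
    (h3 : ∀ c, c ≠ u → ∀ i j : I, pr c (some j) < pr c (some i) ↔
      ((i ∈ Ben c ∧ j ∉ Ben c) ∨ ((i ∈ Ben c ↔ j ∈ Ben c) ∧ π j < π i)))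
    (hinj : ∀ c, Function.Injective (pr c))
    (honce : ∀ (i : I) (c c' : C), c ≠ u → c' ≠ u → i ∈ Ben c → i ∈ Ben c' → c = c')
    {c c' : C} (hc : c ≠ u) (hcc : c' ≠ c)
    {A : Finset I} {i : I} (hiB : i ∈ Ben c)
    (hi2 : i ∈ RSstep pr r c (RSstep pr r c' A)) :
    i ∈ RSstep pr r c' (RSstep pr r c A) ∧
      (RSstep pr r c' (RSstep pr r c A)).card =
        (RSstep pr r c (RSstep pr r c' A)).card ∧
      (∀ y ∈ RSstep pr r c' (RSstep pr r c A) \ RSstep pr r c (RSstep pr r c' A),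
        y ∈ Ben c ∧ π i < π y) ∧
      (∀ x ∈ RSstep pr r c (RSstep pr r c' A) \ RSstep pr r c' (RSstep pr r c A),
        ∀ z ∈ RSstep pr r c (RSstep pr r c' A) ∩ RSstep pr r c' (RSstep pr r c A),
          π z < π x) := by
  classical
  set T := seqTop pr c (r c) A with hT_def
  set U₂ := seqTop pr c' (r c') A with hU₂_def
  have hAT : RSstep pr r c A = A \ T := rfl
  have hAU : RSstep pr r c' A = A \ U₂ := rfl
  set AT := A \ T with hAT_def
  set AU := A \ U₂ with hAU_def
  set U₁ := seqTop pr c' (r c') AT with hU₁_def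
  set ctop₂ := seqTop pr c (r c) AU with hctop₂_def
  have hB₁ : RSstep pr r c' (RSstep pr r c A) = AT \ U₁ := rfl
  have hB₂ : RSstep pr r c (RSstep pr r c' A) = AU \ ctop₂ := rfl
  rw [hB₂] at hi2
  have hiAU : i ∈ AU := (Finset.mem_sdiff.1 hi2).1
  have hiA : i ∈ A := (Finset.mem_sdiff.1 hiAU).1
  have hiU₂ : i ∉ U₂ := (Finset.mem_sdiff.1 hiAU).2
  have hictop : i ∉ ctop₂ := (Finset.mem_sdiff.1 hi2).2
  have hrkc'A : r c' ≤ RSrk pr c' A i :=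
    le_of_not_gt (fun hh => hiU₂ ((RSmem_seqTop h1).2 ⟨hiA, hh⟩))
  have hrkcAU : r c ≤ RSrk pr c AU i :=
    le_of_not_gt (fun hh => hictop ((RSmem_seqTop h1).2 ⟨hiAU, hh⟩))
  have hAUsub : AU ⊆ A := Finset.sdiff_subset
  have hATsub : AT ⊆ A := Finset.sdiff_subset
  -- (b1) every member of T is a beneficiary of c
  have hTB : ∀ t ∈ T, t ∈ Ben c := by
    intro t ht
    by_contra htB
    have hpr : pr c (some t) < pr c (some i) := (h3 c hc i t).2 (Or.inl ⟨hiB, htB⟩)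
    have h4 : RSrk pr c A i < RSrk pr c A t := RSrank_lt hiA hpr
    have h5 : RSrk pr c A t < r c := ((RSmem_seqTop h1).1 ht).2
    have h6 : RSrk pr c AU i ≤ RSrk pr c A i := RSrank_mono hAUsub i
    omega
  -- (b2a) i not taken in chain1's c-step
  have hiT : i ∉ T := by
    intro hiT
    have h5 : RSrk pr c A i < r c := ((RSmem_seqTop h1).1 hiT).2
    have h6 : RSrk pr c AU i ≤ RSrk pr c A i := RSrank_mono hAUsub i
    omega
  have hiAT : i ∈ AT := Finset.mem_sdiff.2 ⟨hiA, hiT⟩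
  -- (b2b) i not taken in chain1's c'-step
  have hcardT : T.card ≤ r c := by
    rw [hT_def, RScard_seqTop h1 hinj]; exact Nat.min_le_left _ _
  have hcardU₂ : U₂.card = r c' := by
    rw [hU₂_def, RScard_seqTop h1 hinj]
    have := RSrank_lt_card (pr := pr) (e := c') hiA
    omega
  have hrkATc' : r c' ≤ RSrk pr c' AT i := by
    set S := AU.filter (fun s => pr c (some i) < pr c (some s)) with hS_def
    set W := A.filter (fun s => pr c' (some i) < pr c' (some s)) with hW_def
    have hScard : r c ≤ S.card := hrkcAU
    have hSsub : S ⊆ W := by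
      intro s hs
      have hs' := Finset.mem_filter.1 hs
      have hsup := RSsuper h3 hc hiB hs'.2
      exact Finset.mem_filter.2 ⟨hAUsub hs'.1,
        RSbeats h2 h3 honce hc hcc hiB hsup.2⟩
    have hU₂sub : U₂ ⊆ W := by
      intro t ht
      have htA : t ∈ A := RSseqTop_subset ht
      have h5 : RSrk pr c' A t < r c' := ((RSmem_seqTop h1).1 ht).2
      exact Finset.mem_filter.2 ⟨htA, RSpr_lt_of_rank hinj htA hiA (by omega)⟩
    have hdisj : Disjoint U₂ S := by
      rw [Finset.disjoint_left]
      intro t htU hts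
      exact (Finset.mem_sdiff.1 (Finset.filter_subset _ _ hts)).2 htU
    have hWge : U₂.card + S.card ≤ W.card := by
      rw [← Finset.card_union_of_disjoint hdisj]
      exact Finset.card_le_card (Finset.union_subset hU₂sub hSsub)
    have hWle : W.card ≤ RSrk pr c' AT i + T.card := by
      have : W ⊆ AT.filter (fun s => pr c' (some i) < pr c' (some s)) ∪ T := by
        intro w hw
        have hw' := Finset.mem_filter.1 hw
        by_cases hwT : w ∈ T
        · exact Finset.mem_union_right _ hwT
        · exact Finset.mem_union_left _
            (Finset.mem_filter.2 ⟨Finset.mem_sdiff.2 ⟨hw'.1, hwT⟩, hw'.2⟩)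
      exact le_trans (Finset.card_le_card this) (Finset.card_union_le _ _)
    omega
  have hiU₁ : i ∉ U₁ := fun hh => by
    have := ((RSmem_seqTop h1).1 hh).2
    omega
  have hiB₁ : i ∈ AT \ U₁ := Finset.mem_sdiff.2 ⟨hiAT, hiU₁⟩
  -- cardinalities
  have hcards : (AT \ U₁).card = (AU \ ctop₂).card := by
    have e1 : (AT \ U₁).card = AT.card - min (r c') AT.card := by
      rw [Finset.card_sdiff_of_subset (RSseqTop_subset), RScard_seqTop h1 hinj]
    have e2 : AT.card = A.card - min (r c) A.card := by
      rw [hAT_def, Finset.card_sdiff_of_subset (RSseqTop_subset), RScard_seqTop h1 hinj]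
    have e3 : (AU \ ctop₂).card = AU.card - min (r c) AU.card := by
      rw [Finset.card_sdiff_of_subset (RSseqTop_subset), RScard_seqTop h1 hinj]
    have e4 : AU.card = A.card - min (r c') A.card := by
      rw [hAU_def, Finset.card_sdiff_of_subset (RSseqTop_subset), RScard_seqTop h1 hinj]
    omega
  refine ⟨hB₁ ▸ hiB₁, by rw [hB₁, hB₂]; exact hcards, ?_, ?_⟩
  -- (b3) extra elements of chain1's pool are super-competitors of i
  · rw [hB₁, hB₂]
    intro y hy
    have hy' := Finset.mem_sdiff.1 hy
    have hy1 := Finset.mem_sdiff.1 hy'.1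
    have hyAT : y ∈ AT := hy1.1
    have hyA : y ∈ A := hATsub hyAT
    have hyU₁ : y ∉ U₁ := hy1.2
    by_cases hyU₂ : y ∈ U₂
    · exfalso
      have h5 : RSrk pr c' A y < r c' := ((RSmem_seqTop h1).1 hyU₂).2
      have h6 : RSrk pr c' AT y ≤ RSrk pr c' A y := RSrank_mono hATsub y
      exact hyU₁ ((RSmem_seqTop h1).2 ⟨hyAT, by omega⟩)
    · have hyAU : y ∈ AU := Finset.mem_sdiff.2 ⟨hyA, hyU₂⟩
      have hyc : y ∈ ctop₂ := by
        by_contra hh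
        exact hy'.2 (Finset.mem_sdiff.2 ⟨hyAU, hh⟩)
      have h5 : RSrk pr c AU y < r c := ((RSmem_seqTop h1).1 hyc).2
      exact RSsuper h3 hc hiB (RSpr_lt_of_rank hinj hyAU hiAU (by omega))
  -- (b4) extra elements of chain2's pool baseline-dominate the common pool
  · rw [hB₁, hB₂]
    intro x hx z hz
    have hx' := Finset.mem_sdiff.1 hx
    have hx2 := Finset.mem_sdiff.1 hx'.1
    have hxAU : x ∈ AU := hx2.1
    have hxA : x ∈ A := hAUsub hxAU
    have hxU₂ : x ∉ U₂ := (Finset.mem_sdiff.1 hxAU).2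
    have hxctop : x ∉ ctop₂ := hx2.2
    have hxT : x ∉ T := by
      intro hxT
      have h5 : RSrk pr c A x < r c := ((RSmem_seqTop h1).1 hxT).2
      have h6 : RSrk pr c AU x ≤ RSrk pr c A x := RSrank_mono hAUsub x
      exact hxctop ((RSmem_seqTop h1).2 ⟨hxAU, by omega⟩)
    have hxAT : x ∈ AT := Finset.mem_sdiff.2 ⟨hxA, hxT⟩
    have hxU₁ : x ∈ U₁ := by
      by_contra hh
      exact hx'.2 (Finset.mem_sdiff.2 ⟨hxAT, hh⟩)
    have hz' := Finset.mem_sdiff.1 (Finset.mem_inter.1 hz).2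
    have hzAT : z ∈ AT := hz'.1
    have hzU₁ : z ∉ U₁ := hz'.2
    have h5 : RSrk pr c' AT x < r c' := ((RSmem_seqTop h1).1 hxU₁).2
    have h6 : r c' ≤ RSrk pr c' AT z :=
      le_of_not_gt (fun hh => hzU₁ ((RSmem_seqTop h1).2 ⟨hzAT, hh⟩))
    have hprz : pr c' (some z) < pr c' (some x) :=
      RSpr_lt_of_rank hinj hxAT hzAT (by omega)
    by_cases hcu' : c' = u
    · subst hcu'; exact (h2 x z).1 hprz
    · have hxB : x ∉ Ben c' := by
        by_contra hxB
        apply hxU₂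
        apply (RSmem_seqTop h1).2
        refine ⟨hxA, ?_⟩
        have hsub : A.filter (fun w => pr c' (some x) < pr c' (some w)) ⊆
            AT.filter (fun w => pr c' (some x) < pr c' (some w)) := by
          intro w hw
          have hw' := Finset.mem_filter.1 hw
          refine Finset.mem_filter.2 ⟨Finset.mem_sdiff.2 ⟨hw'.1, fun hwT => ?_⟩, hw'.2⟩
          exact RSpr_not_lt h3 hcu' hxB
            (RSnotBen honce hc hcu' hcc (hTB w hwT)) hw'.2
        have := Finset.card_le_card hsub
        have h7 : RSrk pr c' A x ≤ RSrk pr c' AT x := this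
        omega
      rw [h3 c' hcu' x z] at hprz
      rcases hprz with ⟨hxB', _⟩ | ⟨_, hπ⟩
      · exact absurd hxB' hxB
      · exact hπ

end Base

/-- Proposition 3: with at most five categories, soft reserves, and each patient a
beneficiary of at most one preferential treatment category, processing a preferential
treatment category `c` earlier weakly shrinks the set of its matched beneficiaries:
`φ_{▷'}(I_c) ⊆ φ_▷(I_c)`. -/
theorem comparative_statics_five_categories
    (π : I → ℕ) (hπ : Function.Injective π)
    (Ben : C → Finset I) (u : C) (hBu : Ben u = univ)
    (pr : C → Option I → ℕ) (hpr : ∀ c, Function.Injective (pr c))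
    (hsoft : BaselineSoft π Ben u pr)
    (honce : ∀ (i : I) (c c' : C), c ≠ u → c' ≠ u → i ∈ Ben c → i ∈ Ben c' → c = c')
    (hcard : Fintype.card C ≤ 5)
    (r : C → ℕ) (c c' : C) (hc : c ≠ u) (hne : c' ≠ c) (L1 L2 : List C)
    (hnd : (L1 ++ c' :: c :: L2).Nodup)
    (hall : ∀ x : C, x ∈ L1 ++ c' :: c :: L2) :
    ∀ i ∈ Ben c, seqMatch pr r (L1 ++ c :: c' :: L2) univ i ≠ none →
      seqMatch pr r (L1 ++ c' :: c :: L2) univ i ≠ none := by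
  obtain ⟨h1, h2, h3⟩ := hsoft
  intro i hiBc hm1 hm2
  apply hm1
  have hmem2 : i ∈ RSresid pr r (L1 ++ c' :: c :: L2) univ :=
    (RSseqMatch_none h1 _ _ i (Finset.mem_univ i)).1 hm2
  refine (RSseqMatch_none h1 _ _ i (Finset.mem_univ i)).2 ?_
  rw [RSresid_append] at hmem2 ⊢
  set A := RSresid pr r L1 (univ : Finset I) with hA_def
  have hm2' : i ∈ RSresid pr r L2 (RSstep pr r c (RSstep pr r c' A)) := hmem2
  show i ∈ RSresid pr r L2 (RSstep pr r c' (RSstep pr r c A))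
  set B₂ := RSstep pr r c (RSstep pr r c' A) with hB₂_def
  set B₁ := RSstep pr r c' (RSstep pr r c A) with hB₁_def
  have hiB₂ : i ∈ B₂ := RSresid_subset L2 _ hm2'
  obtain ⟨hiB₁, hcards, hD1, hD2⟩ :=
    RSbase h1 h2 h3 hpr honce hc hne hiBc hiB₂
  -- the remaining list has length at most 3 and avoids c
  have hlen : L2.length ≤ 3 := by
    have h := List.Nodup.length_le_card hnd
    simp only [List.length_append, List.length_cons] at h
    omega
  have hcL2 : c ∉ L2 := by
    have h := (List.nodup_append.1 hnd).2.1
    have h' := (List.nodup_cons.1 h).2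
    exact (List.nodup_cons.1 h').1
  clear hm1 hm2 hmem2 hall hnd hcard hBu hπ
  obtain _ | ⟨e1, _ | ⟨e2, _ | ⟨e3, _ | ⟨e4, L5⟩⟩⟩⟩ := L2
  · exact hiB₁
  ·
      have he1c : e1 ≠ c := fun h => hcL2 (by simp [h])
      have hm2s : i ∈ RSstep pr r e1 B₂ := hm2'
      have htop1 : i ∉ seqTop pr e1 (r e1) B₂ := (Finset.mem_sdiff.1 hm2s).2
      have hsurv : i ∉ seqTop pr e1 (r e1) B₁ :=
        RSsurv h1 hcards hiB₁ hiB₂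
          (fun y hy => RSbeats h2 h3 honce hc he1c hiBc (hD1 y hy).2) htop1
      exact Finset.mem_sdiff.2 ⟨hiB₁, hsurv⟩
  ·
      have he1c : e1 ≠ c := fun h => hcL2 (by simp [h])
      have he2c : e2 ≠ c := fun h => hcL2 (by simp [h])
      have hm2s : i ∈ RSstep pr r e2 (RSstep pr r e1 B₂) := hm2'
      have hQ2 : i ∈ RSstep pr r e1 B₂ := RSstep_subset hm2s
      have htop1 : i ∉ seqTop pr e1 (r e1) B₂ := (Finset.mem_sdiff.1 hQ2).2
      obtain ⟨hs1top, hs1card, hs1D1⟩ :=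
        RSstepS1 h1 h2 h3 hpr honce hc he1c hiBc hcards hiB₁ hiB₂ hD1 hD2 htop1
      have hQ1 : i ∈ RSstep pr r e1 B₁ := Finset.mem_sdiff.2 ⟨hiB₁, hs1top⟩
      have htop2 : i ∉ seqTop pr e2 (r e2) (RSstep pr r e1 B₂) :=
        (Finset.mem_sdiff.1 hm2s).2
      have hsurv : i ∉ seqTop pr e2 (r e2) (RSstep pr r e1 B₁) :=
        RSsurv h1 hs1card hQ1 hQ2
          (fun y hy => RSbeats h2 h3 honce hc he2c hiBc (hs1D1 y hy).2) htop2
      exact Finset.mem_sdiff.2 ⟨hQ1, hsurv⟩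
  ·
      have he1c : e1 ≠ c := fun h => hcL2 (by simp [h])
      have he2c : e2 ≠ c := fun h => hcL2 (by simp [h])
      have he3c : e3 ≠ c := fun h => hcL2 (by simp [h])
      have hm2s : i ∈ RSstep pr r e3 (RSstep pr r e2 (RSstep pr r e1 B₂)) := hm2'
      have hQ2b : i ∈ RSstep pr r e2 (RSstep pr r e1 B₂) := RSstep_subset hm2s
      have hQ2 : i ∈ RSstep pr r e1 B₂ := RSstep_subset hQ2b
      have htop1 : i ∉ seqTop pr e1 (r e1) B₂ := (Finset.mem_sdiff.1 hQ2).2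
      obtain ⟨hs1top, hs1card, hs1D1⟩ :=
        RSstepS1 h1 h2 h3 hpr honce hc he1c hiBc hcards hiB₁ hiB₂ hD1 hD2 htop1
      have hQ1 : i ∈ RSstep pr r e1 B₁ := Finset.mem_sdiff.2 ⟨hiB₁, hs1top⟩
      have htop2 : i ∉ seqTop pr e2 (r e2) (RSstep pr r e1 B₂) :=
        (Finset.mem_sdiff.1 hQ2b).2
      obtain ⟨hs2top, hs2card, hs2D1⟩ :=
        RSstepS2 h1 h2 h3 hpr honce hc he2c hiBc hs1card hQ1 hQ2 hs1D1 htop2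
      have hQ1b : i ∈ RSstep pr r e2 (RSstep pr r e1 B₁) :=
        Finset.mem_sdiff.2 ⟨hQ1, hs2top⟩
      have htop3 : i ∉ seqTop pr e3 (r e3) (RSstep pr r e2 (RSstep pr r e1 B₂)) :=
        (Finset.mem_sdiff.1 hm2s).2
      have hsurv : i ∉ seqTop pr e3 (r e3) (RSstep pr r e2 (RSstep pr r e1 B₁)) :=
        RSsurv h1 hs2card hQ1b hQ2b
          (fun y hy => RSbeats h2 h3 honce hc he3c hiBc (hs2D1 y hy)) htop3
      exact Finset.mem_sdiff.2 ⟨hQ1b, hsurv⟩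
  · simp at hlen; omega

end ReserveSystem
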